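/- Let β ∈ [0,1) and suppose h, g are holomorphic on 𝔻 with h(z) = z + ∑_{n≥2} a_n z^n, g(z) = ∑_{n≥2} b_n z^n, and Re(h(z)/z) - β > |g(z)/z| for all z ∈ 𝔻\{0} (with the natural value at 0). Then for every n ≥ 2, |a_n| + |b_n| ≤ 2(1-β). -/

import Mathlib

open Complex Metric MeasureTheory Real

lemma ortho (m : ℤ) :
    ∫ θ in Set.Ioc (0:ℝ) (2*Real.pi), Complex.exp (m * θ * I) =
      if m = 0 then (2*Real.pi : ℂ) else 0 := by
  rw [← intervalIntegral.integral_of_le (by positivity : (0:ℝ) ≤ 2*Real.pi)]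
  rcases eq_or_ne m 0 with hm | hm
  · simp [hm]
  · have hc : (m : ℂ) * I ≠ 0 := by
      simp [Complex.ext_iff, hm]
    have : ∀ θ : ℝ, (m : ℂ) * (θ:ℂ) * I = ((m:ℂ) * I) * (θ:ℂ) := by intro θ; ring
    simp only [this]
    rw [integral_exp_mul_complex hc]
    have h1 : (m:ℂ) * I * ((2*Real.pi : ℝ):ℂ) = (m:ℤ) * (2*Real.pi*I) := by
      push_cast; ring
    rw [h1, Complex.exp_int_mul_two_pi_mul_I]
    simp [hm]

lemma carath (β : ℝ) (hβ1 : β < 1) (c : ℕ → ℂ) (hc0 : c 0 = 1)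
    (H : ∀ z : ℂ, ‖z‖ < 1 → z ≠ 0 →
      ∃ F : ℂ, HasSum (fun k => c k * z ^ k) F ∧ β < F.re) :
    ∀ n : ℕ, 1 ≤ n → ‖c n‖ ≤ 2 * (1 - β) := by
  intro n hn
  -- reduce to bound on each radius r < 1
  have main : ∀ r : ℝ, 0 < r → r < 1 → ‖c n‖ * r ^ n ≤ 2 * (1 - β) := by
    intro r hr0 hr1
    set r' : ℝ := (1 + r) / 2 with hr'def
    have hr'0 : 0 < r' := by positivity
    have hrr' : r < r' := by unfold r'; linarith
    have hr'1 : r' < 1 := by unfold r'; linarith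
    -- summability of ‖c k‖ * r ^ k
    have S : Summable (fun k => ‖c k‖ * r ^ k) := by
      obtain ⟨F, hF, -⟩ := H (r' : ℂ) (by simpa [abs_of_pos hr'0] using hr'1)
        (by exact_mod_cast hr'0.ne')
      have h1 : Summable (fun k => c k * (r' : ℂ) ^ k) := hF.summable
      have h2 := h1.tendsto_atTop_zero.norm
      obtain ⟨C, hC⟩ := (h2.bddAbove_range).imp (fun C hC => hC)
      have hCk : ∀ k, ‖c k‖ * r' ^ k ≤ C := by
        intro k
        have := hC ⟨k, rfl⟩
        simpa [norm_mul, norm_pow, abs_of_pos hr'0] using this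
      apply Summable.of_nonneg_of_le (fun k => by positivity)
        (fun k => ?_) (((summable_geometric_of_lt_one (by positivity)
          ((div_lt_one hr'0).2 hrr')).mul_left C))
      have : ‖c k‖ * r ^ k = (‖c k‖ * r' ^ k) * (r / r') ^ k := by
        field_simp
        rw [mul_assoc, ← mul_pow, mul_div_assoc', mul_div_cancel_left₀ r hr'0.ne']
      rw [this]
      exact mul_le_mul_of_nonneg_right (hCk k) (by positivity)
    -- the function on the circle of radius r
    set G : ℝ → ℂ := fun θ => ∑' k, c k * ((r:ℂ) * Complex.exp (θ * I)) ^ k with hGdef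
    have hnormz : ∀ θ : ℝ, ‖(r:ℂ) * Complex.exp (θ * I)‖ = r := by
      intro θ
      simp [norm_mul, Complex.norm_exp, abs_of_pos hr0]
    have hG : ∀ θ : ℝ, HasSum (fun k => c k * ((r:ℂ) * Complex.exp (θ * I)) ^ k) (G θ)
        ∧ β < (G θ).re := by
      intro θ
      obtain ⟨F, hF, hFre⟩ := H ((r:ℂ) * Complex.exp (θ * I))
        (by rw [hnormz θ]; exact hr1)
        (by
          intro hz
          rw [← norm_eq_zero] at hz
          rw [hnormz θ] at hz
          exact hr0.ne' hz)
      have : G θ = F := hF.tsum_eq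
      rw [this]
      exact ⟨hF, hFre⟩
    have hGbound : ∀ (k : ℕ) (θ : ℝ), ‖c k * ((r:ℂ) * Complex.exp (θ * I)) ^ k‖
        = ‖c k‖ * r ^ k := by
      intro k θ
      rw [norm_mul, norm_pow, hnormz θ]
    have hcz0 : Continuous (fun θ : ℝ => (r:ℂ) * Complex.exp (θ * I)) :=
      continuous_const.mul
        (Complex.continuous_exp.comp (Complex.continuous_ofReal.mul continuous_const))
    have hGc : Continuous G := by
      apply continuous_tsum (fun k => continuous_const.mul (hcz0.pow k)) S
      intro k θ
      exact le_of_eq (hGbound k θ)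
    have hce : ∀ m : ℤ, Continuous (fun θ : ℝ => Complex.exp ((m:ℂ) * θ * I)) := by
      intro m
      exact Complex.continuous_exp.comp
        ((continuous_const.mul Complex.continuous_ofReal).mul continuous_const)
    have hcz : Continuous (fun θ : ℝ => (r:ℂ) * Complex.exp (θ * I)) :=
      continuous_const.mul
        (Complex.continuous_exp.comp (Complex.continuous_ofReal.mul continuous_const))
    have hexp1 : ∀ (m : ℤ) (θ : ℝ), ‖Complex.exp ((m:ℂ) * θ * I)‖ = 1 := by
      intro m θ
      simp [Complex.norm_exp]
    have hterm : ∀ (m : ℤ) (k : ℕ) (θ : ℝ),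
        c k * ((r:ℂ) * Complex.exp (θ * I)) ^ k * Complex.exp ((m:ℂ) * θ * I)
          = (c k * (r:ℂ) ^ k) * Complex.exp (((k + m : ℤ) : ℂ) * θ * I) := by
      intro m k θ
      rw [mul_pow, ← Complex.exp_nat_mul, ← mul_assoc, mul_comm (c k), mul_assoc,
        mul_assoc, ← Complex.exp_add]
      push_cast
      ring_nf
    have hFint : ∀ (m : ℤ) (k : ℕ), IntegrableOn
        (fun θ : ℝ => c k * ((r:ℂ) * Complex.exp (θ * I)) ^ k
          * Complex.exp ((m:ℂ) * θ * I)) (Set.Ioc 0 (2*Real.pi)) := by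
      intro m k
      exact ((continuous_const.mul (hcz.pow k)).mul (hce m)).integrableOn_Ioc
    have hInorm : ∀ (m : ℤ) (k : ℕ),
        (∫ θ in Set.Ioc (0:ℝ) (2*Real.pi),
          ‖c k * ((r:ℂ) * Complex.exp (θ * I)) ^ k * Complex.exp ((m:ℂ) * θ * I)‖)
          = (‖c k‖ * r ^ k) * (2*Real.pi) := by
      intro m k
      have : ∀ θ : ℝ, ‖c k * ((r:ℂ) * Complex.exp (θ * I)) ^ k
          * Complex.exp ((m:ℂ) * θ * I)‖ = ‖c k‖ * r ^ k := by
        intro θ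
        rw [norm_mul, hGbound k θ, hexp1 m θ, mul_one]
      simp only [this]
      rw [setIntegral_const, Real.volume_real_Ioc, smul_eq_mul, sub_zero]
      rw [max_eq_left (by positivity)]
      ring
    have hIval : ∀ (m : ℤ) (k : ℕ),
        (∫ θ in Set.Ioc (0:ℝ) (2*Real.pi),
          c k * ((r:ℂ) * Complex.exp (θ * I)) ^ k * Complex.exp ((m:ℂ) * θ * I))
          = if (k : ℤ) + m = 0 then (2*Real.pi : ℂ) * (c k * (r:ℂ) ^ k) else 0 := by
      intro m k
      simp only [hterm m k]
      rw [MeasureTheory.integral_const_mul, ortho]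
      by_cases hkm : (k:ℤ) + m = 0 <;> simp [hkm, mul_comm]
    have key : ∀ (m : ℤ) (L : ℂ),
        HasSum (fun k : ℕ => if (k:ℤ) + m = 0 then (2*Real.pi : ℂ) * (c k * (r:ℂ) ^ k) else 0) L →
        (∫ θ in Set.Ioc (0:ℝ) (2*Real.pi), G θ * Complex.exp ((m:ℂ) * θ * I)) = L := by
      intro m L hL
      have hs := MeasureTheory.hasSum_integral_of_summable_integral_norm
        (μ := volume.restrict (Set.Ioc (0:ℝ) (2*Real.pi)))
        (F := fun (k : ℕ) (θ : ℝ) => c k * ((r:ℂ) * Complex.exp (θ * I)) ^ k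
          * Complex.exp ((m:ℂ) * θ * I)) (hFint m) ?_
      · have heq : ∀ θ : ℝ, (∑' k : ℕ, c k * ((r:ℂ) * Complex.exp (θ * I)) ^ k
            * Complex.exp ((m:ℂ) * θ * I)) = G θ * Complex.exp ((m:ℂ) * θ * I) := by
          intro θ
          exact ((hG θ).1.mul_right _).tsum_eq
        simp only [heq] at hs
        simp only [hIval m] at hs
        rw [← hs.tsum_eq, ← hL.tsum_eq]
      · simp only [hInorm m]
        exact S.mul_right _
    have hterm2 : ∀ (m : ℤ) (k : ℕ) (θ : ℝ),
        (starRingEnd ℂ) (c k * ((r:ℂ) * Complex.exp (θ * I)) ^ k) * Complex.exp ((m:ℂ) * θ * I)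
          = ((starRingEnd ℂ) (c k) * (r:ℂ) ^ k) * Complex.exp (((-(k:ℤ) + m : ℤ) : ℂ) * θ * I) := by
      intro m k θ
      rw [map_mul, map_pow, map_mul, Complex.conj_ofReal, ← Complex.exp_conj]
      have h1 : (starRingEnd ℂ) ((θ:ℂ) * I) = -((θ:ℂ) * I) := by
        simp [Complex.conj_ofReal]
      rw [h1, mul_pow, ← Complex.exp_nat_mul, ← mul_assoc, mul_comm ((starRingEnd ℂ) (c k)),
        mul_assoc, mul_assoc, ← Complex.exp_add]
      push_cast
      ring_nf
    have key2 : ∀ (m : ℤ) (L : ℂ),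
        HasSum (fun k : ℕ => if -(k:ℤ) + m = 0 then
          (2*Real.pi : ℂ) * ((starRingEnd ℂ) (c k) * (r:ℂ) ^ k) else 0) L →
        (∫ θ in Set.Ioc (0:ℝ) (2*Real.pi),
          (starRingEnd ℂ) (G θ) * Complex.exp ((m:ℂ) * θ * I)) = L := by
      intro m L hL
      have hs := MeasureTheory.hasSum_integral_of_summable_integral_norm
        (μ := volume.restrict (Set.Ioc (0:ℝ) (2*Real.pi)))
        (F := fun (k : ℕ) (θ : ℝ) =>
          (starRingEnd ℂ) (c k * ((r:ℂ) * Complex.exp (θ * I)) ^ k)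
            * Complex.exp ((m:ℂ) * θ * I)) ?_ ?_
      · have heq : ∀ θ : ℝ, (∑' k : ℕ, (starRingEnd ℂ) (c k * ((r:ℂ) * Complex.exp (θ * I)) ^ k)
            * Complex.exp ((m:ℂ) * θ * I))
            = (starRingEnd ℂ) (G θ) * Complex.exp ((m:ℂ) * θ * I) := by
          intro θ
          have hstar : HasSum (fun k : ℕ => (starRingEnd ℂ) (c k * ((r:ℂ) * Complex.exp (θ * I)) ^ k))
              ((starRingEnd ℂ) (G θ)) := by
            simpa [RCLike.star_def] using (hG θ).1.star
          exact (hstar.mul_right _).tsum_eq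
        simp only [heq] at hs
        have hIval2 : ∀ k : ℕ,
            (∫ θ in Set.Ioc (0:ℝ) (2*Real.pi),
              (starRingEnd ℂ) (c k * ((r:ℂ) * Complex.exp (θ * I)) ^ k)
                * Complex.exp ((m:ℂ) * θ * I))
              = if -(k:ℤ) + m = 0 then (2*Real.pi : ℂ) * ((starRingEnd ℂ) (c k) * (r:ℂ) ^ k)
                  else 0 := by
          intro k
          simp only [hterm2 m k]
          rw [MeasureTheory.integral_const_mul, ortho]
          by_cases hkm : -(k:ℤ) + m = 0 <;> simp [hkm, mul_comm]
        simp only [hIval2] at hs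
        rw [← hs.tsum_eq, ← hL.tsum_eq]
      · intro k
        exact (((continuous_const.mul (hcz.pow k)).star).mul (hce m)).integrableOn_Ioc
      · have : ∀ k : ℕ, (∫ θ in Set.Ioc (0:ℝ) (2*Real.pi),
            ‖(starRingEnd ℂ) (c k * ((r:ℂ) * Complex.exp (θ * I)) ^ k)
              * Complex.exp ((m:ℂ) * θ * I)‖) = (‖c k‖ * r ^ k) * (2*Real.pi) := by
          intro k
          have heq : ∀ θ : ℝ, ‖(starRingEnd ℂ) (c k * ((r:ℂ) * Complex.exp (θ * I)) ^ k)
              * Complex.exp ((m:ℂ) * θ * I)‖ = ‖c k‖ * r ^ k := by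
            intro θ
            rw [norm_mul, RCLike.norm_conj, hGbound k θ, hexp1 m θ, mul_one]
          simp only [heq]
          rw [setIntegral_const, Real.volume_real_Ioc, smul_eq_mul, sub_zero]
          rw [max_eq_left (by positivity)]
          ring
        simp only [this]
        exact S.mul_right _
    -- the four integral values
    have hA1 : (∫ θ in Set.Ioc (0:ℝ) (2*Real.pi),
        G θ * Complex.exp (((-(n:ℤ) : ℤ):ℂ) * θ * I)) = (2*Real.pi : ℂ) * (c n * (r:ℂ) ^ n) := by
      apply key (-(n:ℤ))
      have heq : (fun k : ℕ => if (k:ℤ) + -(n:ℤ) = 0 then (2*Real.pi:ℂ) * (c k * (r:ℂ)^k) else 0)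
          = fun k : ℕ => if k = n then (2*Real.pi:ℂ) * (c n * (r:ℂ)^n) else 0 := by
        funext k
        by_cases hk : k = n
        · simp [hk]
        · have h2 : ¬((k:ℤ) + -(n:ℤ) = 0) := by omega
          simp [hk, h2]
      rw [heq]
      exact hasSum_ite_eq n _
    have hA2 : (∫ θ in Set.Ioc (0:ℝ) (2*Real.pi),
        (starRingEnd ℂ) (G θ) * Complex.exp (((-(n:ℤ) : ℤ):ℂ) * θ * I)) = 0 := by
      apply key2 (-(n:ℤ))
      have heq : (fun k : ℕ => if -(k:ℤ) + -(n:ℤ) = 0 then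
          (2*Real.pi:ℂ) * ((starRingEnd ℂ) (c k) * (r:ℂ)^k) else 0) = fun _ : ℕ => (0:ℂ) := by
        funext k
        have h2 : ¬(-(k:ℤ) + -(n:ℤ) = 0) := by omega
        simp [h2]
      rw [heq]
      exact hasSum_zero
    have hA3 : (∫ θ in Set.Ioc (0:ℝ) (2*Real.pi), G θ) = (2*Real.pi : ℂ) := by
      have := key 0 ((2*Real.pi : ℂ)) ?_
      · simpa using this
      · have heq : (fun k : ℕ => if (k:ℤ) + 0 = 0 then (2*Real.pi:ℂ) * (c k * (r:ℂ)^k) else 0)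
            = fun k : ℕ => if k = 0 then (2*Real.pi:ℂ) else 0 := by
          funext k
          by_cases hk : k = 0
          · simp [hk, hc0]
          · have h2 : ¬((k:ℤ) + 0 = 0) := by omega
            simp [hk, h2]
        rw [heq]
        exact hasSum_ite_eq 0 _
    have hA4 : (∫ θ in Set.Ioc (0:ℝ) (2*Real.pi), (starRingEnd ℂ) (G θ)) = (2*Real.pi : ℂ) := by
      have := key2 0 ((2*Real.pi : ℂ)) ?_
      · simpa using this
      · have heq : (fun k : ℕ => if -(k:ℤ) + 0 = 0 then
            (2*Real.pi:ℂ) * ((starRingEnd ℂ) (c k) * (r:ℂ)^k) else 0)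
            = fun k : ℕ => if k = 0 then (2*Real.pi:ℂ) else 0 := by
          funext k
          by_cases hk : k = 0
          · simp [hk, hc0]
          · have h2 : ¬(-(k:ℤ) + 0 = 0) := by omega
            simp [hk, h2]
        rw [heq]
        exact hasSum_ite_eq 0 _
    -- combined integral
    set e : ℝ → ℂ := fun θ => Complex.exp (((-(n:ℤ) : ℤ):ℂ) * θ * I) with hedef
    have hGint : IntegrableOn (fun θ : ℝ => G θ * e θ) (Set.Ioc 0 (2*Real.pi)) :=
      (hGc.mul (hce (-(n:ℤ)))).integrableOn_Ioc
    have hGcint : IntegrableOn (fun θ : ℝ => (starRingEnd ℂ) (G θ) * e θ)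
        (Set.Ioc 0 (2*Real.pi)) := ((hGc.star).mul (hce (-(n:ℤ)))).integrableOn_Ioc
    have hcint : IntegrableOn (fun θ : ℝ => (2*(β:ℂ)) * e θ) (Set.Ioc 0 (2*Real.pi)) :=
      (continuous_const.mul (hce (-(n:ℤ)))).integrableOn_Ioc
    have hEzero : (∫ θ in Set.Ioc (0:ℝ) (2*Real.pi), e θ) = 0 := by
      rw [hedef]
      rw [ortho (-(n:ℤ))]
      have : ¬(-(n:ℤ) = 0) := by omega
      simp [this]
    have hI : (∫ θ in Set.Ioc (0:ℝ) (2*Real.pi),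
        (G θ + (starRingEnd ℂ) (G θ) - 2*(β:ℂ)) * e θ)
        = (2*Real.pi : ℂ) * (c n * (r:ℂ) ^ n) := by
      have hsplit : ∀ θ : ℝ, (G θ + (starRingEnd ℂ) (G θ) - 2*(β:ℂ)) * e θ
          = G θ * e θ + (starRingEnd ℂ) (G θ) * e θ - (2*(β:ℂ)) * e θ := by
        intro θ; ring
      simp only [hsplit]
      have hadd : IntegrableOn (fun θ : ℝ => G θ * e θ + (starRingEnd ℂ) (G θ) * e θ)
          (Set.Ioc 0 (2*Real.pi)) := hGint.add hGcint
      rw [MeasureTheory.integral_sub hadd hcint,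
        MeasureTheory.integral_add hGint hGcint, MeasureTheory.integral_const_mul, hEzero]
      simp only [hedef]
      rw [hA1, hA2]
      ring
    -- pointwise norm
    have hptw : ∀ θ : ℝ, ‖(G θ + (starRingEnd ℂ) (G θ) - 2*(β:ℂ)) * e θ‖
        = 2*(G θ).re - 2*β := by
      intro θ
      rw [norm_mul, hedef, hexp1 (-(n:ℤ)) θ, mul_one]
      have hd : G θ + (starRingEnd ℂ) (G θ) - 2*(β:ℂ) = ((2*(G θ).re - 2*β : ℝ) : ℂ) := by
        rw [Complex.add_conj]
        push_cast
        ring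
      have hge : (0:ℝ) ≤ 2*(G θ).re - 2*β := by linarith [(hG θ).2]
      rw [hd, Complex.norm_real, Real.norm_eq_abs, _root_.abs_of_nonneg hge]
    -- value of the real integral
    have hGre : (∫ θ in Set.Ioc (0:ℝ) (2*Real.pi), (G θ).re) = 2*Real.pi := by
      have hint : IntegrableOn G (Set.Ioc (0:ℝ) (2*Real.pi)) := hGc.integrableOn_Ioc
      have := integral_re (𝕜 := ℂ) (μ := volume.restrict (Set.Ioc (0:ℝ) (2*Real.pi))) hint
      rw [hA3] at this
      simpa using this
    have hreint : (∫ θ in Set.Ioc (0:ℝ) (2*Real.pi), (2*(G θ).re - 2*β))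
        = 2*(2*Real.pi) - 2*β*(2*Real.pi) := by
      have h1 : IntegrableOn (fun θ : ℝ => 2*(G θ).re) (Set.Ioc 0 (2*Real.pi)) :=
        (continuous_const.mul (Complex.continuous_re.comp hGc)).integrableOn_Ioc
      have h2 : IntegrableOn (fun _ : ℝ => 2*β) (Set.Ioc 0 (2*Real.pi)) :=
        continuous_const.integrableOn_Ioc
      rw [MeasureTheory.integral_sub h1 h2, MeasureTheory.integral_const_mul, hGre,
        setIntegral_const, Real.volume_real_Ioc, smul_eq_mul, sub_zero,
        max_eq_left (by positivity)]
      ring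
    -- the bound
    have hbound : ‖(2*Real.pi : ℂ) * (c n * (r:ℂ) ^ n)‖ ≤ 2*(2*Real.pi) - 2*β*(2*Real.pi) := by
      rw [← hI, ← hreint]
      calc ‖∫ θ in Set.Ioc (0:ℝ) (2*Real.pi),
            (G θ + (starRingEnd ℂ) (G θ) - 2*(β:ℂ)) * e θ‖
          ≤ ∫ θ in Set.Ioc (0:ℝ) (2*Real.pi),
            ‖(G θ + (starRingEnd ℂ) (G θ) - 2*(β:ℂ)) * e θ‖ :=
            norm_integral_le_integral_norm _
        _ = ∫ θ in Set.Ioc (0:ℝ) (2*Real.pi), (2*(G θ).re - 2*β) := by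
            simp only [hptw]
    have hnval : ‖(2*Real.pi : ℂ) * (c n * (r:ℂ) ^ n)‖ = (2*Real.pi) * (‖c n‖ * r ^ n) := by
      have h1 : ‖(2*Real.pi : ℂ)‖ = 2*Real.pi := by
        rw [show (2*Real.pi : ℂ) = ((2*Real.pi : ℝ) : ℂ) by push_cast; ring,
          Complex.norm_real, Real.norm_eq_abs, _root_.abs_of_nonneg (by positivity)]
      have h2 : ‖(r:ℂ)‖ = r := by
        rw [Complex.norm_real, Real.norm_eq_abs, abs_of_pos hr0]
      rw [norm_mul, h1, norm_mul, norm_pow, h2]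
    rw [hnval] at hbound
    have hpi : (0:ℝ) < 2*Real.pi := by positivity
    nlinarith [hbound]
  -- take the limit r → 1⁻
  have hlim : Filter.Tendsto (fun r : ℝ => ‖c n‖ * r ^ n)
      (nhdsWithin (1:ℝ) (Set.Iio 1)) (nhds (‖c n‖ * 1 ^ n)) :=
    Filter.Tendsto.mono_left
      ((continuous_const.mul (continuous_pow n)).tendsto 1) nhdsWithin_le_nhds
  have hev : ∀ᶠ r in nhdsWithin (1:ℝ) (Set.Iio 1), ‖c n‖ * r ^ n ≤ 2*(1-β) := by
    filter_upwards [Ioo_mem_nhdsLT_of_mem (by norm_num : (1:ℝ) ∈ Set.Ioc 0 1)] with r hr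
    exact main r hr.1 hr.2
  have := le_of_tendsto hlim hev
  simpa using this

theorem stmt_19 (β : ℝ) (hβ0 : 0 ≤ β) (hβ1 : β < 1) (h g : ℂ → ℂ) (a b : ℕ → ℂ)
    (ha0 : a 0 = 0) (ha1 : a 1 = 1) (hb0 : b 0 = 0) (hb1 : b 1 = 0)
    (hha : ∀ z ∈ Metric.ball (0 : ℂ) 1, HasSum (fun n : ℕ => a n * z ^ n) (h z))
    (hhb : ∀ z ∈ Metric.ball (0 : ℂ) 1, HasSum (fun n : ℕ => b n * z ^ n) (g z))
    (hcond : ∀ z ∈ Metric.ball (0 : ℂ) 1, z ≠ 0 → (h z / z).re - β > ‖g z / z‖) :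
    ∀ n : ℕ, 2 ≤ n → ‖a n‖ + ‖b n‖ ≤ 2 * (1 - β) := by
  intro n hn
  -- choose a unimodular ε aligning the phases of a n and b n
  obtain ⟨ε, hε1, hε2⟩ : ∃ ε : ℂ, ‖ε‖ = 1 ∧ ‖a n‖ + ‖b n‖ = ‖a n + ε * b n‖ := by
    rcases eq_or_ne (b n) 0 with hb | hb
    · exact ⟨1, norm_one, by simp [hb]⟩
    rcases eq_or_ne (a n) 0 with ha | ha
    · exact ⟨1, norm_one, by simp [ha]⟩
    refine ⟨(a n * (‖b n‖ : ℂ)) / (b n * (‖a n‖ : ℂ)), ?_, ?_⟩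
    · rw [norm_div, norm_mul, norm_mul, Complex.norm_real, Complex.norm_real,
        Real.norm_eq_abs, Real.norm_eq_abs, abs_norm, abs_norm]
      rw [div_eq_one_iff_eq (mul_ne_zero (norm_ne_zero_iff.2 hb) (norm_ne_zero_iff.2 ha))]
      ring
    · have hkey : a n + (a n * (‖b n‖ : ℂ)) / (b n * (‖a n‖ : ℂ)) * b n
          = a n * (((‖a n‖ + ‖b n‖ : ℝ) : ℂ) / ((‖a n‖ : ℝ) : ℂ)) := by
        have hb' : (b n : ℂ) ≠ 0 := hb
        have ha' : ((‖a n‖ : ℝ) : ℂ) ≠ 0 := by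
          simp [norm_eq_zero, ha]
        have hstep : (a n * (‖b n‖ : ℂ)) / (b n * (‖a n‖ : ℂ)) * b n
            = a n * (‖b n‖ : ℂ) / (‖a n‖ : ℂ) := by
          rw [div_mul_eq_mul_div, div_eq_div_iff (mul_ne_zero hb' ha') ha']
          ring
        rw [hstep, mul_div_assoc]
        rw [show ((‖a n‖ + ‖b n‖ : ℝ) : ℂ) = ((‖a n‖:ℝ):ℂ) + ((‖b n‖:ℝ):ℂ) by push_cast; ring]
        rw [add_div, div_self ha']
        ring
      rw [hkey, norm_mul, norm_div, Complex.norm_real, Complex.norm_real,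
        Real.norm_eq_abs, Real.norm_eq_abs, abs_norm,
        _root_.abs_of_nonneg (by positivity : (0:ℝ) ≤ ‖a n‖ + ‖b n‖)]
      rw [mul_div_assoc', mul_comm, mul_div_assoc]
      rw [div_self (by simpa [norm_eq_zero] using ha), mul_one]
  set c : ℕ → ℂ := fun k => a (k+1) + ε * b (k+1) with hcdef
  have hc0 : c 0 = 1 := by simp [hcdef, ha1, hb1]
  have H : ∀ z : ℂ, ‖z‖ < 1 → z ≠ 0 →
      ∃ F : ℂ, HasSum (fun k => c k * z ^ k) F ∧ β < F.re := by
    intro z hz hz0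
    have hzball : z ∈ Metric.ball (0:ℂ) 1 := by
      simpa [Metric.mem_ball, dist_eq_norm] using hz
    have h1 := hha z hzball
    have h2 := (hhb z hzball).mul_left ε
    have hsum : HasSum (fun k : ℕ => (a k + ε * b k) * z ^ k) (h z + ε * g z) := by
      have := h1.add h2
      convert this using 2 with k
      ring
    have hshift : HasSum (fun k : ℕ => (a (k+1) + ε * b (k+1)) * z ^ (k+1))
        (h z + ε * g z) := by
      apply (hasSum_nat_add_iff (f := fun k : ℕ => (a k + ε * b k) * z ^ k) 1).2
      simpa [ha0, hb0] using hsum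
    have hdiv : HasSum (fun k : ℕ => c k * z ^ k) ((h z + ε * g z) / z) := by
      have := hshift.div_const z
      convert this using 2 with k
      · rfl
      rw [hcdef]
      field_simp
      ring
    refine ⟨(h z + ε * g z) / z, hdiv, ?_⟩
    have hre : ((h z + ε * g z) / z).re = (h z / z).re + (ε * (g z / z)).re := by
      rw [add_div, mul_div_assoc, Complex.add_re]
    have hbnd : -‖g z / z‖ ≤ (ε * (g z / z)).re := by
      have h3 : |(ε * (g z / z)).re| ≤ ‖ε * (g z / z)‖ := by
        exact Complex.abs_re_le_norm _
      have h4 : ‖ε * (g z / z)‖ = ‖g z / z‖ := by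
        rw [norm_mul, hε1, one_mul]
      rw [h4] at h3
      linarith [(abs_le.1 h3).1]
    have := hcond z hzball hz0
    rw [hre]
    linarith
  have hfin := carath β hβ1 c hc0 H (n - 1) (by omega)
  have hcn : c (n - 1) = a n + ε * b n := by
    have hn1 : n - 1 + 1 = n := by omega
    show a (n - 1 + 1) + ε * b (n - 1 + 1) = a n + ε * b n
    rw [hn1]
  rw [hε2]
  rw [hcn] at hfin
  exact hfin
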